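/- arXiv:1110.1715 — 2 statements merged into one kernel-verified Lean document; each statement's English description precedes it below -/
import Mathlib

section
/- Let ABCD be a convex quadrilateral in the Euclidean plane ℝ². There exists δ_E > 0 such that for every point E strictly inside segment AB with dist(A,E) < δ_E, there exists δ_F > 0 (depending on E) such that for every point F strictly inside segment BC with dist(B,F) < δ_F, the convex pentagon T = AEFCD, with interior angles Â = ∠DAE, Ê = ∠AEF, F̂ = ∠EFC, Ĉ = ∠FCD, D̂ = ∠CDA, satisfies: (i) 2·dist(A,E) < min{dist(E,F), dist(F,C), dist(C,D), dist(D,A)}; (ii) for all natural numbers a, b, c, d, e with a·Â + b·Ê + c·F̂ + d·Ĉ + e·D̂ = 2π, if b ≥ 1 or c ≥ 1, then b = 1, c = 1, and exactly one of a, d, e is positive; (iii) for each l ∈ {dist(E,F), 2·dist(F,C)}, for all natural numbers a, b and all c ∈ {0, 1, −1, 2, −2}, one has l ≠ a·dist(C,D) + b·dist(D,A) + c·dist(A,E). -/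
open Real EuclideanGeometry

abbrev P2 : Type := EuclideanSpace ℝ (Fin 2)

/-- A convex quadrilateral ABCD (in cyclic order): the four points are in convex
position (no vertex in the convex hull of the other three) and the diagonals
AC and BD cross. -/
def IsConvexQuadrilateral (A B C D : P2) : Prop :=
  A ∉ convexHull ℝ ({B, C, D} : Set P2) ∧
  B ∉ convexHull ℝ ({A, C, D} : Set P2) ∧
  C ∉ convexHull ℝ ({A, B, D} : Set P2) ∧
  D ∉ convexHull ℝ ({A, B, C} : Set P2) ∧
  (openSegment ℝ A C ∩ openSegment ℝ B D).Nonempty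

lemma exists_margin {ι : Type*} (s : Finset ι) (f : ι → ℝ) (hf : ∀ i ∈ s, 0 < f i) :
    ∃ ε : ℝ, 0 < ε ∧ ε ≤ 1 ∧ ∀ i ∈ s, ε ≤ f i := by
  classical
  induction s using Finset.induction_on with
  | empty => exact ⟨1, one_pos, le_refl 1, by simp⟩
  | insert _ _ hx ih =>
    rename_i a t
    obtain ⟨ε, hε, hε1, hle⟩ := ih (fun i hi => hf i (Finset.mem_insert_of_mem hi))
    refine ⟨min ε (f a), lt_min hε (hf a (Finset.mem_insert_self a t)), min_le_of_left_le hε1, ?_⟩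
    intro i hi
    rcases Finset.mem_insert.1 hi with rfl | hi
    · exact min_le_right _ _
    · exact le_trans (min_le_left _ _) (hle i hi)

lemma angle_split {A B X D : P2} (h : Sbtw ℝ B X D) (hAB : A ≠ B) (hAD : A ≠ D)
    (hAX : A ≠ X) : ∠ B A X + ∠ X A D = ∠ B A D := by
  have h1 := EuclideanGeometry.angle_add_angle_add_angle_eq_pi (p₁ := A) (p₂ := B) (p₃ := X)
    hAB.symm
  have h2 := EuclideanGeometry.angle_add_angle_add_angle_eq_pi (p₁ := A) (p₂ := X) (p₃ := D)
    hAX.symm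
  have h3 := EuclideanGeometry.angle_add_angle_add_angle_eq_pi (p₁ := A) (p₂ := B) (p₃ := D)
    hAB.symm
  have r1 : ∠ A B X = ∠ A B D := angle_eq_angle_of_angle_eq_pi A h.angle₁₂₃_eq_pi
  have r2 : ∠ A D X = ∠ A D B := angle_eq_angle_of_angle_eq_pi A h.symm.angle₁₂₃_eq_pi
  have r3 : ∠ A X B + ∠ A X D = π := angle_add_angle_eq_pi_of_angle_eq_pi A h.angle₁₂₃_eq_pi
  have c1 := angle_comm B X A
  have c2 := angle_comm X A B
  have c3 := angle_comm X D A
  have c4 := angle_comm D A X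
  have c5 := angle_comm B D A
  have c6 := angle_comm D A B
  linarith

lemma quad_angle_sum {A B C D X : P2} (h1 : Sbtw ℝ A X C) (h2 : Sbtw ℝ B X D)
    (hAB : A ≠ B) (hAD : A ≠ D) (hBC : B ≠ C) (hCD : C ≠ D) :
    ∠ D A B + ∠ A B C + ∠ B C D + ∠ C D A = 2 * π := by
  have hXA : X ≠ A := h1.2.1
  have hXC : X ≠ C := h1.2.2
  have hXB : X ≠ B := h2.2.1
  have hXD : X ≠ D := h2.2.2
  have sA : ∠ B A X + ∠ X A D = ∠ B A D := angle_split h2 hAB hAD hXA.symm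
  have sB : ∠ A B X + ∠ X B C = ∠ A B C := angle_split h1 hAB.symm hBC hXB.symm
  have sC : ∠ B C X + ∠ X C D = ∠ B C D := angle_split h2 hBC.symm hCD hXC.symm
  have sD : ∠ C D X + ∠ X D A = ∠ C D A := angle_split h1.symm hCD.symm hAD.symm hXD.symm
  have t1 := EuclideanGeometry.angle_add_angle_add_angle_eq_pi (p₁ := X) (p₂ := A) (p₃ := B)
    hXA.symm
  have t2 := EuclideanGeometry.angle_add_angle_add_angle_eq_pi (p₁ := X) (p₂ := B) (p₃ := C)
    hXB.symm
  have t3 := EuclideanGeometry.angle_add_angle_add_angle_eq_pi (p₁ := X) (p₂ := C) (p₃ := D)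
    hXC.symm
  have t4 := EuclideanGeometry.angle_add_angle_add_angle_eq_pi (p₁ := X) (p₂ := D) (p₃ := A)
    hXD.symm
  have x1 : ∠ B X A + ∠ B X C = π := angle_add_angle_eq_pi_of_angle_eq_pi B h1.angle₁₂₃_eq_pi
  have x2 : ∠ D X A + ∠ D X C = π := angle_add_angle_eq_pi_of_angle_eq_pi D h1.angle₁₂₃_eq_pi
  have c1 := angle_comm C X B
  have c2 := angle_comm D X C
  have c3 := angle_comm A X D
  have c4 := angle_comm B A X
  have c5 := angle_comm X A D
  have c6 := angle_comm B A D
  have c7 := angle_comm D A B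
  have c8 := angle_comm A X B
  linarith

lemma notseg {V W U : P2} {s : Set P2} (h : V ∉ convexHull ℝ s) (hW : W ∈ s) (hU : U ∈ s) :
    V ∉ segment ℝ W U :=
  fun hm => h (segment_subset_convexHull hW hU hm)

lemma not_collinear_aux {X Y Z : P2} (h1 : X ∉ segment ℝ Y Z) (h2 : Y ∉ segment ℝ X Z)
    (h3 : Z ∉ segment ℝ X Y) : ¬ Collinear ℝ ({X, Y, Z} : Set P2) := by
  intro hc
  rcases hc.wbtw_or_wbtw_or_wbtw with h | h | h
  · exact h2 h.mem_segment
  · rw [segment_symm] at h3; exact h3 h.mem_segment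
  · rw [segment_symm] at h1; exact h1 h.mem_segment

lemma core_ii (α β γ δ t ε₀ : ℝ) (N : ℕ)
    (hα0 : 0 < α) (hβ0 : 0 < β) (hγ0 : 0 < γ) (hδ0 : 0 < δ)
    (hαπ : α < π) (hβπ : β < π) (hγπ : γ < π) (hδπ : δ < π)
    (hsum : α + β + γ + δ = 2*π)
    (hN : 2*π + 1 < N * min (min α β) (min γ δ)) (hN5 : 5 ≤ N)
    (hε₀ : 0 < ε₀)
    (hmarg : ∀ a b c d e : ℕ, a ≤ N → b ≤ N → c ≤ N → d ≤ N → e ≤ N →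
      (a:ℝ)*α + b*π + c*β + d*γ + e*δ ≠ 2*π →
      ε₀ ≤ |(a:ℝ)*α + b*π + c*β + d*γ + e*δ - 2*π|)
    (ht0 : 0 < t) (ht1 : t < 1) (ht2 : t < ε₀ / (2*N+1))
    (a b c d e : ℕ)
    (heq : (a:ℝ)*α + b*(π - t) + c*(β + t) + d*γ + e*δ = 2*π)
    (hbc : 1 ≤ b ∨ 1 ≤ c) :
    b = 1 ∧ c = 1 ∧ ((0 < a ∧ d = 0 ∧ e = 0) ∨ (a = 0 ∧ 0 < d ∧ e = 0) ∨
      (a = 0 ∧ d = 0 ∧ 0 < e)) := by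
  have hπ3 : (3:ℝ) < π := pi_gt_three
  have hπ4 : π < 3.15 := pi_lt_d2
  set m := min (min α β) (min γ δ) with hm
  have hm0 : 0 < m := lt_min (lt_min hα0 hβ0) (lt_min hγ0 hδ0)
  have hmα : m ≤ α := le_trans (min_le_left _ _) (min_le_left _ _)
  have hmβ : m ≤ β := le_trans (min_le_left _ _) (min_le_right _ _)
  have hmγ : m ≤ γ := le_trans (min_le_right _ _) (min_le_left _ _)
  have hmδ : m ≤ δ := le_trans (min_le_right _ _) (min_le_right _ _)
  have hN5' : (5:ℝ) ≤ (N:ℝ) := by exact_mod_cast hN5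
  have ha0 : (0:ℝ) ≤ (a:ℝ) := Nat.cast_nonneg a
  have hb0 : (0:ℝ) ≤ (b:ℝ) := Nat.cast_nonneg b
  have hc0 : (0:ℝ) ≤ (c:ℝ) := Nat.cast_nonneg c
  have hd0 : (0:ℝ) ≤ (d:ℝ) := Nat.cast_nonneg d
  have he0 : (0:ℝ) ≤ (e:ℝ) := Nat.cast_nonneg e
  have hπt : (2:ℝ) < π - t := by linarith
  have p1 : (0:ℝ) ≤ (a:ℝ) * α := mul_nonneg ha0 hα0.le
  have p2 : (0:ℝ) ≤ (b:ℝ) * (π - t) := mul_nonneg hb0 (by linarith)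
  have p3 : (0:ℝ) ≤ (c:ℝ) * (β + t) := mul_nonneg hc0 (by linarith)
  have p4 : (0:ℝ) ≤ (d:ℝ) * γ := mul_nonneg hd0 hγ0.le
  have p5 : (0:ℝ) ≤ (e:ℝ) * δ := mul_nonneg he0 hδ0.le
  have pct : (0:ℝ) ≤ (c:ℝ) * t := mul_nonneg hc0 ht0.le
  have hNm : (2:ℝ)*π + 1 < (N:ℝ) * m := hN
  have haN : a ≤ N := by
    have h1 : (a:ℝ) * α ≤ 2*π := by linarith
    have h2 : (N:ℝ) * m ≤ (N:ℝ) * α := mul_le_mul_of_nonneg_left hmα (by linarith)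
    have h3 : (a:ℝ) * α < (N:ℝ) * α := by linarith
    have : (a:ℝ) < (N:ℝ) := lt_of_mul_lt_mul_right h3 hα0.le
    exact le_of_lt (by exact_mod_cast this)
  have hcN : c ≤ N := by
    have h0 : (c:ℝ) * β + c * t = c * (β + t) := by ring
    have h1 : (c:ℝ) * β ≤ 2*π := by linarith
    have h2 : (N:ℝ) * m ≤ (N:ℝ) * β := mul_le_mul_of_nonneg_left hmβ (by linarith)
    have h3 : (c:ℝ) * β < (N:ℝ) * β := by linarith
    have : (c:ℝ) < (N:ℝ) := lt_of_mul_lt_mul_right h3 hβ0.le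
    exact le_of_lt (by exact_mod_cast this)
  have hdN : d ≤ N := by
    have h1 : (d:ℝ) * γ ≤ 2*π := by linarith
    have h2 : (N:ℝ) * m ≤ (N:ℝ) * γ := mul_le_mul_of_nonneg_left hmγ (by linarith)
    have h3 : (d:ℝ) * γ < (N:ℝ) * γ := by linarith
    have : (d:ℝ) < (N:ℝ) := lt_of_mul_lt_mul_right h3 hγ0.le
    exact le_of_lt (by exact_mod_cast this)
  have heN : e ≤ N := by
    have h1 : (e:ℝ) * δ ≤ 2*π := by linarith
    have h2 : (N:ℝ) * m ≤ (N:ℝ) * δ := mul_le_mul_of_nonneg_left hmδ (by linarith)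
    have h3 : (e:ℝ) * δ < (N:ℝ) * δ := by linarith
    have : (e:ℝ) < (N:ℝ) := lt_of_mul_lt_mul_right h3 hδ0.le
    exact le_of_lt (by exact_mod_cast this)
  have hb4 : (b:ℝ) < 4 := by
    have h1 : (b:ℝ) * (π - t) ≤ 2*π := by linarith
    have h2 : (b:ℝ) * 2 ≤ (b:ℝ) * (π - t) := mul_le_mul_of_nonneg_left hπt.le hb0
    linarith
  have hbN : b ≤ N := by
    have : (b:ℝ) < (N:ℝ) := by linarith
    exact le_of_lt (by exact_mod_cast this)
  have key : (a:ℝ)*α + b*π + c*β + d*γ + e*δ - 2*π = ((b:ℝ) - c) * t := by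
    linear_combination heq
  by_cases hv : (a:ℝ)*α + b*π + c*β + d*γ + e*δ = 2*π
  · have hbceq : (b:ℝ) = c := by
      have h0 : ((b:ℝ) - c) * t = 0 := by linarith
      rcases mul_eq_zero.1 h0 with h | h
      · linarith
      · exact absurd h ht0.ne'
    have hbc' : b = c := by exact_mod_cast hbceq
    have hbge1 : 1 ≤ b := by rcases hbc with h | h <;> omega
    have hb1 : b = 1 := by
      by_contra hb1
      have h2 : 2 ≤ b := by omega
      have hb2 : (2:ℝ) ≤ (b:ℝ) := by exact_mod_cast h2
      have hc2 : (2:ℝ) ≤ (c:ℝ) := by rw [← hbceq]; exact hb2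
      have hq1 : (2:ℝ) * π ≤ (b:ℝ) * π := mul_le_mul_of_nonneg_right hb2 pi_pos.le
      have hq2 : (2:ℝ) * β ≤ (c:ℝ) * β := mul_le_mul_of_nonneg_right hc2 hβ0.le
      linarith
    have hc1 : c = 1 := by omega
    subst hb1; subst hc1
    have heq3 : (a:ℝ)*α + d*γ + e*δ = π - β := by push_cast at hv; linarith
    refine ⟨rfl, rfl, ?_⟩
    have key2 : ∀ (x : ℕ) (u : ℝ), 0 < u → 0 < x → u ≤ (x:ℝ)*u := fun x u hu hx =>
      le_mul_of_one_le_left hu.le (by exact_mod_cast hx)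
    rcases Nat.eq_zero_or_pos a with ha | ha <;> rcases Nat.eq_zero_or_pos d with hd | hd <;>
      rcases Nat.eq_zero_or_pos e with he | he
    · exfalso; subst ha; subst hd; subst he; push_cast at heq3; linarith
    · exact Or.inr (Or.inr ⟨by omega, hd, he⟩)
    · exact Or.inr (Or.inl ⟨by omega, hd, by omega⟩)
    · exfalso
      have h1 : γ ≤ (d:ℝ)*γ := key2 d γ hγ0 hd
      have h2 : δ ≤ (e:ℝ)*δ := key2 e δ hδ0 he
      linarith [p1]
    · exact Or.inl ⟨ha, by omega, by omega⟩
    · exfalso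
      have h1 : α ≤ (a:ℝ)*α := key2 a α hα0 ha
      have h2 : δ ≤ (e:ℝ)*δ := key2 e δ hδ0 he
      linarith [p4]
    · exfalso
      have h1 : α ≤ (a:ℝ)*α := key2 a α hα0 ha
      have h2 : γ ≤ (d:ℝ)*γ := key2 d γ hγ0 hd
      linarith [p5]
    · exfalso
      have h1 : α ≤ (a:ℝ)*α := key2 a α hα0 ha
      have h2 : γ ≤ (d:ℝ)*γ := key2 d γ hγ0 hd
      linarith [p5]
  · exfalso
    have h1 := hmarg a b c d e haN hbN hcN hdN heN hv
    rw [key] at h1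
    have hbN' : (b:ℝ) ≤ N := by exact_mod_cast hbN
    have hcN' : (c:ℝ) ≤ N := by exact_mod_cast hcN
    have h2 : |(b:ℝ) - c| ≤ 2*N := by
      rw [abs_sub_le_iff]; constructor <;> linarith
    have h3 : |((b:ℝ) - c) * t| ≤ 2*N*t := by
      rw [abs_mul, abs_of_pos ht0]
      exact mul_le_mul_of_nonneg_right h2 ht0.le
    clear key heq hmarg
    have h4 : t * (2*(N:ℝ)+1) < ε₀ := (lt_div_iff₀ (by positivity)).1 ht2
    have h5 : ε₀ ≤ 2*(N:ℝ)*t := le_trans h1 h3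
    linarith [h4, h5, ht0]

lemma core_iii (CD DA AE T l ε₂ : ℝ) (M : ℕ)
    (hCD : 0 < CD) (hDA : 0 < DA) (hAE : 0 < AE)
    (hM : T + 2*AE + 3 < M * min CD DA)
    (hε₂1 : ε₂ ≤ 1)
    (hmarg : ∀ (a b : ℕ) (c : ℤ), a ≤ M → b ≤ M → c ∈ ({0, 1, -1, 2, -2} : Set ℤ) →
      (a:ℝ)*CD + b*DA + c*AE ≠ T → ε₂ ≤ |(a:ℝ)*CD + b*DA + c*AE - T|)
    (hlT : l ≠ T) (hnear : |l - T| < ε₂) :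
    ∀ (a b : ℕ) (c : ℤ), c ∈ ({0, 1, -1, 2, -2} : Set ℤ) →
      l ≠ (a:ℝ)*CD + b*DA + c*AE := by
  intro a b c hc hl
  have hc2 : -2 ≤ (c:ℝ) ∧ (c:ℝ) ≤ 2 := by
    rcases hc with h | h | h | h | h <;> subst h <;> norm_num
  have hcAE : -(2*AE) ≤ (c:ℝ) * AE := by nlinarith [hc2.1, hAE]
  by_cases hv : (a:ℝ)*CD + b*DA + c*AE = T
  · exact hlT (hl.trans hv)
  by_cases hab : a ≤ M ∧ b ≤ M
  · have h1 := hmarg a b c hab.1 hab.2 hc hv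
    rw [← hl] at h1
    linarith
  · have hm : min CD DA ≤ CD := min_le_left _ _
    have hm' : min CD DA ≤ DA := min_le_right _ _
    have hmin0 : (0:ℝ) < min CD DA := lt_min hCD hDA
    have hbig : (M:ℝ) * min CD DA ≤ (a:ℝ)*CD + (b:ℝ)*DA := by
      rcases not_and_or.1 hab with h | h
      · have hMa : (M:ℝ) < a := by exact_mod_cast Nat.lt_of_not_le (by omega)
        have : (M:ℝ) * min CD DA ≤ (a:ℝ) * CD := by
          calc (M:ℝ) * min CD DA ≤ (a:ℝ) * min CD DA :=
                mul_le_mul_of_nonneg_right hMa.le hmin0.le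
            _ ≤ (a:ℝ) * CD := mul_le_mul_of_nonneg_left hm (Nat.cast_nonneg a)
        have hb0 : (0:ℝ) ≤ (b:ℝ)*DA := mul_nonneg (Nat.cast_nonneg b) hDA.le
        linarith
      · have hMb : (M:ℝ) < b := by exact_mod_cast Nat.lt_of_not_le (by omega)
        have : (M:ℝ) * min CD DA ≤ (b:ℝ) * DA := by
          calc (M:ℝ) * min CD DA ≤ (b:ℝ) * min CD DA :=
                mul_le_mul_of_nonneg_right hMb.le hmin0.le
            _ ≤ (b:ℝ) * DA := mul_le_mul_of_nonneg_left hm' (Nat.cast_nonneg b)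
        have ha0 : (0:ℝ) ≤ (a:ℝ)*CD := mul_nonneg (Nat.cast_nonneg a) hCD.le
        linarith
    have hvbig : T + 3 < (a:ℝ)*CD + b*DA + c*AE := by linarith
    have : l < T + 1 := by
      have := abs_lt.1 hnear
      linarith [this.2]
    linarith [hl ▸ this]

set_option maxHeartbeats 2000000 in
/-- Selection of the points E ∈ AB and F ∈ BC subject to the conditions
(i)–(iii) of Lemma 3 in the paper. -/
theorem exists_EF_selection
    (A B C D : P2) (hQ : IsConvexQuadrilateral A B C D) :
    ∃ δE > (0:ℝ), ∀ E ∈ openSegment ℝ A B, dist A E < δE →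
      ∃ δF > (0:ℝ), ∀ F ∈ openSegment ℝ B C, dist B F < δF →
        (2 * dist A E < min (min (dist E F) (dist F C)) (min (dist C D) (dist D A))) ∧
        (∀ a b c d e : ℕ,
          a * ∠ D A E + b * ∠ A E F + c * ∠ E F C + d * ∠ F C D + e * ∠ C D A
            = 2 * π →
          (1 ≤ b ∨ 1 ≤ c) →
          b = 1 ∧ c = 1 ∧
            ((0 < a ∧ d = 0 ∧ e = 0) ∨ (a = 0 ∧ 0 < d ∧ e = 0) ∨
              (a = 0 ∧ d = 0 ∧ 0 < e))) ∧
        (∀ l ∈ ({dist E F, 2 * dist F C} : Set ℝ), ∀ (a b : ℕ) (c : ℤ),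
          c ∈ ({0, 1, -1, 2, -2} : Set ℤ) →
          l ≠ a * dist C D + b * dist D A + (c : ℝ) * dist A E) := by
  classical
  obtain ⟨hA, hB, hC, hD, X, hX1, hX2⟩ := hQ
  -- distinctness
  have hAB : A ≠ B := fun h => hA (subset_convexHull ℝ _ (by simp [h]))
  have hAC : A ≠ C := fun h => hA (subset_convexHull ℝ _ (by simp [h]))
  have hAD : A ≠ D := fun h => hA (subset_convexHull ℝ _ (by simp [h]))
  have hBC : B ≠ C := fun h => hB (subset_convexHull ℝ _ (by simp [h]))
  have hBD : B ≠ D := fun h => hB (subset_convexHull ℝ _ (by simp [h]))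
  have hCD : C ≠ D := fun h => hC (subset_convexHull ℝ _ (by simp [h]))
  -- noncollinearity of vertex triples
  have hnDAB : ¬ Collinear ℝ ({D, A, B} : Set P2) :=
    not_collinear_aux (notseg hD (by simp) (by simp)) (notseg hA (by simp) (by simp))
      (notseg hB (by simp) (by simp))
  have hnABC : ¬ Collinear ℝ ({A, B, C} : Set P2) :=
    not_collinear_aux (notseg hA (by simp) (by simp)) (notseg hB (by simp) (by simp))
      (notseg hC (by simp) (by simp))
  have hnBCD : ¬ Collinear ℝ ({B, C, D} : Set P2) :=
    not_collinear_aux (notseg hB (by simp) (by simp)) (notseg hC (by simp) (by simp))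
      (notseg hD (by simp) (by simp))
  have hnCDA : ¬ Collinear ℝ ({C, D, A} : Set P2) :=
    not_collinear_aux (notseg hC (by simp) (by simp)) (notseg hD (by simp) (by simp))
      (notseg hA (by simp) (by simp))
  -- the crossing point
  have hsAXC : Sbtw ℝ A X C := by
    refine ⟨mem_segment_iff_wbtw.1 (openSegment_subset_segment ℝ A C hX1), ?_, ?_⟩
    · intro h; rw [h] at hX1; exact hAC (left_mem_openSegment_iff.1 hX1)
    · intro h; rw [h] at hX1; exact hAC (right_mem_openSegment_iff.1 hX1)
  have hsBXD : Sbtw ℝ B X D := by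
    refine ⟨mem_segment_iff_wbtw.1 (openSegment_subset_segment ℝ B D hX2), ?_, ?_⟩
    · intro h; rw [h] at hX2; exact hBD (left_mem_openSegment_iff.1 hX2)
    · intro h; rw [h] at hX2; exact hBD (right_mem_openSegment_iff.1 hX2)
  -- the four angles
  have hα0 : 0 < ∠ D A B := angle_pos_of_not_collinear hnDAB
  have hαπ : ∠ D A B < π := angle_lt_pi_of_not_collinear hnDAB
  have hβ0 : 0 < ∠ A B C := angle_pos_of_not_collinear hnABC
  have hβπ : ∠ A B C < π := angle_lt_pi_of_not_collinear hnABC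
  have hγ0 : 0 < ∠ B C D := angle_pos_of_not_collinear hnBCD
  have hγπ : ∠ B C D < π := angle_lt_pi_of_not_collinear hnBCD
  have hδ0 : 0 < ∠ C D A := angle_pos_of_not_collinear hnCDA
  have hδπ : ∠ C D A < π := angle_lt_pi_of_not_collinear hnCDA
  have hsum : ∠ D A B + ∠ A B C + ∠ B C D + ∠ C D A = 2 * π :=
    quad_angle_sum hsAXC hsBXD hAB hAD hBC hCD
  set qα := ∠ D A B
  set qβ := ∠ A B C
  set qγ := ∠ B C D
  set qδ := ∠ C D A
  -- the global constant N and margin ε₀ for condition (ii)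
  set m := min (min qα qβ) (min qγ qδ) with hm_def
  have hm0 : 0 < m := lt_min (lt_min hα0 hβ0) (lt_min hγ0 hδ0)
  obtain ⟨N, hNgt⟩ := exists_nat_gt (max 5 ((2*π+1)/m))
  have hN5 : 5 ≤ N := by
    have h5 : (5:ℝ) < (N:ℝ) := lt_of_le_of_lt (le_max_left _ _) hNgt
    exact_mod_cast h5.le
  have hNm : 2*π + 1 < (N:ℝ) * m := by
    have := lt_of_le_of_lt (le_max_right 5 ((2*π+1)/m)) hNgt
    exact (div_lt_iff₀ hm0).1 this
  set fII : ℕ × ℕ × ℕ × ℕ × ℕ → ℝ := fun p =>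
    if (p.1:ℝ)*qα + p.2.1*π + p.2.2.1*qβ + p.2.2.2.1*qγ + p.2.2.2.2*qδ = 2*π then 1
    else |(p.1:ℝ)*qα + p.2.1*π + p.2.2.1*qβ + p.2.2.2.1*qγ + p.2.2.2.2*qδ - 2*π| with hfII_def
  obtain ⟨ε₀, hε₀0, hε₀1, hε₀⟩ := exists_margin
    (Finset.range (N+1) ×ˢ Finset.range (N+1) ×ˢ Finset.range (N+1) ×ˢ Finset.range (N+1)
      ×ˢ Finset.range (N+1)) fII
    (by
      intro i _
      simp only [hfII_def]
      split
      · norm_num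
      · next h => exact abs_pos.2 (sub_ne_zero.2 h))
  have hmargII : ∀ a b c d e : ℕ, a ≤ N → b ≤ N → c ≤ N → d ≤ N → e ≤ N →
      (a:ℝ)*qα + b*π + c*qβ + d*qγ + e*qδ ≠ 2*π →
      ε₀ ≤ |(a:ℝ)*qα + b*π + c*qβ + d*qγ + e*qδ - 2*π| := by
    intro a b c d e ha hb hc hd he hne
    have hmem : (a, b, c, d, e) ∈ (Finset.range (N+1) ×ˢ Finset.range (N+1) ×ˢ
        Finset.range (N+1) ×ˢ Finset.range (N+1) ×ˢ Finset.range (N+1)) := by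
      simp [Finset.mem_product, Nat.lt_succ_iff, ha, hb, hc, hd, he]
    have := hε₀ _ hmem
    simp only [hfII_def] at this
    rwa [if_neg hne] at this
  set ε₁ := min 1 (ε₀ / (2*N+1)) with hε₁_def
  have hε₁0 : 0 < ε₁ := lt_min one_pos (by positivity)
  -- choose δE
  have hdAB : 0 < dist A B := dist_pos.2 hAB
  have hdBC : 0 < dist B C := dist_pos.2 hBC
  have hdCD : 0 < dist C D := dist_pos.2 hCD
  have hdDA : 0 < dist D A := dist_pos.2 (Ne.symm hAD)
  refine ⟨min (dist A B) (min (dist B C) (min (dist C D) (dist D A))) / 8, by positivity, ?_⟩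
  intro E hE hAEδ
  have hEA : E ≠ A := by
    rintro rfl; exact hAB (left_mem_openSegment_iff.1 hE)
  have hEB : E ≠ B := by
    rintro rfl; exact hAB (right_mem_openSegment_iff.1 hE)
  have hsAEB : Sbtw ℝ A E B :=
    ⟨mem_segment_iff_wbtw.1 (openSegment_subset_segment ℝ A B hE), hEA, hEB⟩
  have hDAE : ∠ D A E = qα := angle_eq_angle_of_angle_eq_pi D hsAEB.angle₁₂₃_eq_pi
  have hdistAEB : dist A E + dist E B = dist A B := hsAEB.wbtw.dist_add_dist
  have hAE0 : 0 < dist A E := dist_pos.2 (Ne.symm hEA)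
  have hEB0 : 0 < dist E B := dist_pos.2 hEB
  -- constant M and margins for condition (iii)
  set m₂ := min (dist C D) (dist D A) with hm₂_def
  have hm₂0 : 0 < m₂ := lt_min hdCD hdDA
  obtain ⟨M, hMgt⟩ := exists_nat_gt
    ((max (dist E B) (2*dist B C) + 2*dist A E + 3) / m₂)
  have hM : max (dist E B) (2*dist B C) + 2*dist A E + 3 < (M:ℝ) * m₂ :=
    (div_lt_iff₀ hm₂0).1 hMgt
  have hM1 : dist E B + 2*dist A E + 3 < (M:ℝ) * m₂ :=
    lt_of_le_of_lt (by linarith [le_max_left (dist E B) (2*dist B C)]) hM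
  have hM2 : 2*dist B C + 2*dist A E + 3 < (M:ℝ) * m₂ :=
    lt_of_le_of_lt (by linarith [le_max_right (dist E B) (2*dist B C)]) hM
  set cfin : Finset ℤ := {0, 1, -1, 2, -2} with hcfin_def
  set vIII : ℕ × ℕ × ℤ → ℝ := fun p =>
    (p.1:ℝ) * dist C D + p.2.1 * dist D A + p.2.2 * dist A E with hvIII_def
  set gE : ℕ × ℕ × ℤ → ℝ := fun p =>
    if vIII p = dist E B then 1 else |vIII p - dist E B| with hgE_def
  set gC : ℕ × ℕ × ℤ → ℝ := fun p =>
    if vIII p = 2*dist B C then 1 else |vIII p - 2*dist B C| with hgC_def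
  obtain ⟨ε₂, hε₂0, hε₂1, hε₂⟩ := exists_margin
    (Finset.range (M+1) ×ˢ Finset.range (M+1) ×ˢ cfin) gE
    (by
      intro i _
      simp only [hgE_def]
      split
      · norm_num
      · next h => exact abs_pos.2 (sub_ne_zero.2 h))
  obtain ⟨ε₃, hε₃0, hε₃1, hε₃⟩ := exists_margin
    (Finset.range (M+1) ×ˢ Finset.range (M+1) ×ˢ cfin) gC
    (by
      intro i _
      simp only [hgC_def]
      split
      · norm_num
      · next h => exact abs_pos.2 (sub_ne_zero.2 h))
  have hmemIII : ∀ (a b : ℕ) (c : ℤ), a ≤ M → b ≤ M → c ∈ ({0, 1, -1, 2, -2} : Set ℤ) →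
      (a, b, c) ∈ (Finset.range (M+1) ×ˢ Finset.range (M+1) ×ˢ cfin) := by
    intro a b c ha hb hc
    simp only [Finset.mem_product, Finset.mem_range, Nat.lt_succ_iff, hcfin_def]
    refine ⟨ha, hb, ?_⟩
    rcases hc with h | h | h | h | h <;> subst h <;> decide
  have hmargE : ∀ (a b : ℕ) (c : ℤ), a ≤ M → b ≤ M → c ∈ ({0, 1, -1, 2, -2} : Set ℤ) →
      (a:ℝ)*dist C D + b*dist D A + c*dist A E ≠ dist E B →
      ε₂ ≤ |(a:ℝ)*dist C D + b*dist D A + c*dist A E - dist E B| := by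
    intro a b c ha hb hc hne
    have := hε₂ _ (hmemIII a b c ha hb hc)
    simp only [hgE_def, hvIII_def] at this
    rwa [if_neg hne] at this
  have hmargC : ∀ (a b : ℕ) (c : ℤ), a ≤ M → b ≤ M → c ∈ ({0, 1, -1, 2, -2} : Set ℤ) →
      (a:ℝ)*dist C D + b*dist D A + c*dist A E ≠ 2*dist B C →
      ε₃ ≤ |(a:ℝ)*dist C D + b*dist D A + c*dist A E - 2*dist B C| := by
    intro a b c ha hb hc hne
    have := hε₃ _ (hmemIII a b c ha hb hc)
    simp only [hgC_def, hvIII_def] at this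
    rwa [if_neg hne] at this
  -- continuity of the small angle
  have hBneE : B ≠ E := hEB.symm
  have hcont : ContinuousAt (fun F : P2 => ∠ F E B) B := by
    have h0 : ContinuousAt (fun y : P2 × P2 × P2 => ∠ y.1 y.2.1 y.2.2) (B, E, B) :=
      EuclideanGeometry.continuousAt_angle hBneE hBneE
    have h1 : Continuous (fun F : P2 => (F, E, B)) := by fun_prop
    have h2 : ContinuousAt ((fun y : P2 × P2 × P2 => ∠ y.1 y.2.1 y.2.2) ∘
        (fun F : P2 => (F, E, B))) B :=
      ContinuousAt.comp (f := fun F : P2 => (F, E, B)) (x := B) h0 h1.continuousAt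
    exact h2
  rw [Metric.continuousAt_iff] at hcont
  obtain ⟨δa, hδa0, hδa⟩ := hcont ε₁ hε₁0
  -- the threshold preventing dist E F = dist E B
  set δ₃ : ℝ := if 0 < 2 * dist E B * Real.cos qβ then 2 * dist E B * Real.cos qβ else 1
    with hδ₃_def
  have hδ₃0 : 0 < δ₃ := by
    rw [hδ₃_def]; split
    · assumption
    · norm_num
  -- choose δF
  refine ⟨min (min (dist A B / 8) (dist B C / 2)) (min (min δa δ₃) (min (ε₂/2) (ε₃/2))),
    by positivity, ?_⟩
  intro F hF hBFδ
  have hFB : F ≠ B := by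
    rintro rfl; exact hBC (left_mem_openSegment_iff.1 hF)
  have hFC : F ≠ C := by
    rintro rfl; exact hBC (right_mem_openSegment_iff.1 hF)
  have hsBFC : Sbtw ℝ B F C :=
    ⟨mem_segment_iff_wbtw.1 (openSegment_subset_segment ℝ B C hF), hFB, hFC⟩
  have hBF0 : 0 < dist B F := dist_pos.2 (Ne.symm hFB)
  have hdistBFC : dist B F + dist F C = dist B C := hsBFC.wbtw.dist_add_dist
  -- F, E, B are not collinear
  have hnFEB : ¬ Collinear ℝ ({F, E, B} : Set P2) := by
    intro hcol
    have hcolAEB : Collinear ℝ ({A, E, B} : Set P2) := hsAEB.wbtw.collinear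
    have hcolBFC : Collinear ℝ ({B, F, C} : Set P2) := hsBFC.wbtw.collinear
    have hFline : F ∈ line[ℝ, E, B] :=
      hcol.mem_affineSpan_of_mem_of_ne (by simp) (by simp) (by simp) hEB
    have hAline : A ∈ line[ℝ, E, B] :=
      hcolAEB.mem_affineSpan_of_mem_of_ne (by simp) (by simp) (by simp) hEB
    have h4 : Collinear ℝ ({A, F, E, B} : Set P2) :=
      collinear_insert_insert_of_mem_affineSpan_pair hAline hFline
    have hAlineBF : A ∈ line[ℝ, B, F] :=
      h4.mem_affineSpan_of_mem_of_ne (by simp) (by simp) (by simp) hFB.symm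
    have hClineBF : C ∈ line[ℝ, B, F] :=
      hcolBFC.mem_affineSpan_of_mem_of_ne (by simp) (by simp) (by simp) hFB.symm
    have h5 : Collinear ℝ ({A, C, B, F} : Set P2) :=
      collinear_insert_insert_of_mem_affineSpan_pair hAlineBF hClineBF
    exact hnABC (Collinear.subset (by intro x hx; simp at hx ⊢; tauto) h5)
  have hFE : F ≠ E := by
    rintro rfl
    apply hnFEB
    have : ({F, F, B} : Set P2) = {F, B} := by simp
    rw [this]
    exact collinear_pair ℝ F B
  -- the small angle t
  set t := ∠ F E B with ht_def
  have ht0 : 0 < t := angle_pos_of_not_collinear hnFEB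
  have htε₁ : t < ε₁ := by
    have h1 : dist F B < δa := by
      rw [dist_comm]
      exact lt_of_lt_of_le hBFδ (le_trans (min_le_right _ _)
        (le_trans (min_le_left _ _) (min_le_left _ _)))
    have h2 := hδa h1
    rw [angle_self_of_ne hBneE, Real.dist_eq, sub_zero] at h2
    exact lt_of_le_of_lt (le_abs_self t) h2
  have ht1 : t < 1 := lt_of_lt_of_le htε₁ (min_le_left _ _)
  have ht2 : t < ε₀ / (2*N+1) := lt_of_lt_of_le htε₁ (min_le_right _ _)
  -- angle identities
  have hEBF : ∠ E B F = qβ := by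
    have h1 : ∠ E B F = ∠ E B C := angle_eq_angle_of_angle_eq_pi E hsBFC.angle₁₂₃_eq_pi
    have h2 : ∠ C B E = ∠ C B A := angle_eq_angle_of_angle_eq_pi C hsAEB.symm.angle₁₂₃_eq_pi
    rw [h1, angle_comm E B C, h2, angle_comm C B A]
  have hAEF : ∠ A E F = π - t := by
    have h1 : ∠ F E A + ∠ F E B = π :=
      angle_add_angle_eq_pi_of_angle_eq_pi F hsAEB.angle₁₂₃_eq_pi
    rw [angle_comm A E F]
    linarith
  have hEFC : ∠ E F C = qβ + t := by
    have h1 : ∠ E B F + ∠ B F E + ∠ F E B = π :=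
      EuclideanGeometry.angle_add_angle_add_angle_eq_pi (p₁ := E) (p₂ := B) (p₃ := F)
        hBneE
    have h2 : ∠ E F B + ∠ E F C = π :=
      angle_add_angle_eq_pi_of_angle_eq_pi E hsBFC.angle₁₂₃_eq_pi
    have h3 := angle_comm B F E
    rw [hEBF] at h1
    linarith
  have hFCD : ∠ F C D = qγ := by
    have h1 : ∠ D C F = ∠ D C B := angle_eq_angle_of_angle_eq_pi D hsBFC.symm.angle₁₂₃_eq_pi
    rw [angle_comm F C D, h1, angle_comm D C B]
  -- dist E F is close to, but different from, dist E B
  have htriEF1 : dist E F ≤ dist E B + dist B F := dist_triangle E B F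
  have htriEF2 : dist E B ≤ dist E F + dist B F := by
    have := dist_triangle E F B
    rwa [dist_comm F B] at this
  have hEFne : dist E F ≠ dist E B := by
    intro heq
    have hlaw := EuclideanGeometry.law_cos E B F
    rw [hEBF, heq] at hlaw
    have h0 : dist F B * (dist F B - 2 * dist E B * Real.cos qβ) = 0 := by
      linear_combination -1 * hlaw
    have hBF0' : dist F B ≠ 0 := by rw [dist_comm]; exact hBF0.ne'
    have h1 : dist F B = 2 * dist E B * Real.cos qβ := by
      rcases mul_eq_zero.1 h0 with h | h
      · exact absurd h hBF0'
      · linarith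
    have hpos : 0 < 2 * dist E B * Real.cos qβ := by
      rw [← h1, dist_comm]; exact hBF0
    have hδ₃eq : δ₃ = 2 * dist E B * Real.cos qβ := by rw [hδ₃_def, if_pos hpos]
    have : dist B F < δ₃ := lt_of_lt_of_le hBFδ (le_trans (min_le_right _ _)
      (le_trans (min_le_left _ _) (min_le_right _ _)))
    rw [hδ₃eq, ← h1, dist_comm F B] at this
    exact lt_irrefl _ this
  -- bounds on δF components
  have hBF_AB8 : dist B F < dist A B / 8 :=
    lt_of_lt_of_le hBFδ (le_trans (min_le_left _ _) (min_le_left _ _))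
  have hBF_BC2 : dist B F < dist B C / 2 :=
    lt_of_lt_of_le hBFδ (le_trans (min_le_left _ _) (min_le_right _ _))
  have hBF_ε₂ : dist B F < ε₂ / 2 :=
    lt_of_lt_of_le hBFδ (le_trans (min_le_right _ _)
      (le_trans (min_le_right _ _) (min_le_left _ _)))
  have hBF_ε₃ : dist B F < ε₃ / 2 :=
    lt_of_lt_of_le hBFδ (le_trans (min_le_right _ _)
      (le_trans (min_le_right _ _) (min_le_right _ _)))
  have hAE_min : dist A E < min (dist A B) (min (dist B C) (min (dist C D) (dist D A))) / 8 :=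
    hAEδ
  have hmin_AB : min (dist A B) (min (dist B C) (min (dist C D) (dist D A))) ≤ dist A B :=
    min_le_left _ _
  have hmin_BC : min (dist A B) (min (dist B C) (min (dist C D) (dist D A))) ≤ dist B C :=
    le_trans (min_le_right _ _) (min_le_left _ _)
  have hmin_CD : min (dist A B) (min (dist B C) (min (dist C D) (dist D A))) ≤ dist C D :=
    le_trans (min_le_right _ _) (le_trans (min_le_right _ _) (min_le_left _ _))
  have hmin_DA : min (dist A B) (min (dist B C) (min (dist C D) (dist D A))) ≤ dist D A :=
    le_trans (min_le_right _ _) (le_trans (min_le_right _ _) (min_le_right _ _))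
  refine ⟨?_, ?_, ?_⟩
  -- condition (i)
  · refine lt_min (lt_min ?_ ?_) (lt_min ?_ ?_)
    · -- 2 AE < EF
      have hEF : dist A B - dist A E - dist B F ≤ dist E F := by linarith
      linarith
    · -- 2 AE < FC
      linarith
    · -- 2 AE < CD
      linarith
    · -- 2 AE < DA
      linarith
  -- condition (ii)
  · intro a b c d e heq hbc
    rw [hDAE, hAEF, hEFC, hFCD] at heq
    exact core_ii qα qβ qγ qδ t ε₀ N hα0 hβ0 hγ0 hδ0 hαπ hβπ hγπ hδπ hsum hNm hN5 hε₀0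
      hmargII ht0 ht1 ht2 a b c d e heq hbc
  -- condition (iii)
  · intro l hl a b c hc
    rcases hl with rfl | hl
    · -- l = dist E F
      refine core_iii (dist C D) (dist D A) (dist A E) (dist E B) (dist E F) ε₂ M
        hdCD hdDA hAE0 hM1 hε₂1 hmargE hEFne ?_ a b c hc
      have h1 : |dist E F - dist E B| ≤ dist B F := by
        rw [abs_sub_le_iff]
        constructor <;> linarith
      linarith
    · -- l = 2 * dist F C
      have hl' : l = 2 * dist F C := by simpa using hl
      subst hl'
      refine core_iii (dist C D) (dist D A) (dist A E) (2 * dist B C) (2 * dist F C) ε₃ M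
        hdCD hdDA hAE0 hM2 hε₃1 hmargC ?_ ?_ a b c hc
      · intro h
        have : dist F C = dist B C := by linarith
        linarith
      · have : 2 * dist F C - 2 * dist B C = -(2 * dist B F) := by linarith
        rw [this, abs_neg, abs_of_pos (by linarith)]
        linarith
end

section
/- Let A, B, C be three non-collinear points in the Euclidean plane. For t, s ∈ (0,1), set E_t = A + t·(B − A) and F_s = B + s·(C − B). Then as (t, s) → (0, 0) within (0,1) × (0,1), the angle ∠A E_t F_s tends to π and the angle ∠E_t F_s C tends to ∠ABC. -/
open Real EuclideanGeometry Filter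

/-- As E → A along AB and F → B along BC, the angle ∠AEF tends to π and the
angle ∠EFC tends to ∠ABC. -/
theorem angle_limits
    (A B C : P2) (h : AffineIndependent ℝ ![A, B, C]) :
    Tendsto (fun p : ℝ × ℝ => ∠ A (A + p.1 • (B - A)) (B + p.2 • (C - B)))
      (nhdsWithin (0, 0) (Set.Ioo (0:ℝ) 1 ×ˢ Set.Ioo (0:ℝ) 1)) (nhds π) ∧
    Tendsto (fun p : ℝ × ℝ => ∠ (A + p.1 • (B - A)) (B + p.2 • (C - B)) C)
      (nhdsWithin (0, 0) (Set.Ioo (0:ℝ) 1 ×ˢ Set.Ioo (0:ℝ) 1)) (nhds (∠ A B C)) := by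
  have hBA : B ≠ A := by
    intro e
    exact (h.injective.ne (show (1:Fin 3) ≠ 0 by decide)) (by simp [e])
  have hCB : C ≠ B := by
    intro e
    exact (h.injective.ne (show (2:Fin 3) ≠ 1 by decide)) (by simp [e])
  have hBA' : B - A ≠ 0 := sub_ne_zero.mpr hBA
  have hCB' : C - B ≠ 0 := sub_ne_zero.mpr hCB
  constructor
  · -- first angle
    have key : ∀ p : ℝ × ℝ, p ∈ Set.Ioo (0:ℝ) 1 ×ˢ Set.Ioo (0:ℝ) 1 →
        ∠ A (A + p.1 • (B - A)) (B + p.2 • (C - B)) =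
        InnerProductGeometry.angle (-(B - A))
          ((1 - p.1) • (B - A) + p.2 • (C - B)) := by
      rintro ⟨t, s⟩ ⟨ht, hs⟩
      simp only [EuclideanGeometry.angle]
      have h1 : A -ᵥ (A + t • (B - A)) = t • (-(B - A)) := by
        simp only [vsub_eq_sub]; module
      have h2 : (B + s • (C - B)) -ᵥ (A + t • (B - A)) =
          (1 - t) • (B - A) + s • (C - B) := by
        simp only [vsub_eq_sub]; module
      rw [h1, h2, InnerProductGeometry.angle_smul_left_of_pos _ _ ht.1]
    refine Tendsto.congr' (eventually_nhdsWithin_of_forall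
      (fun p hp => (key p hp).symm)) ?_
    have hcont := InnerProductGeometry.continuousAt_angle
      (x := (-(B - A), B - A)) (neg_ne_zero.mpr hBA') hBA'
    have hval : InnerProductGeometry.angle (-(B - A)) (B - A) = π :=
      InnerProductGeometry.angle_neg_self_of_nonzero hBA'
    have hmap : Tendsto (fun p : ℝ × ℝ =>
        ((-(B - A), (1 - p.1) • (B - A) + p.2 • (C - B)) : P2 × P2))
        (nhdsWithin (0, 0) (Set.Ioo (0:ℝ) 1 ×ˢ Set.Ioo (0:ℝ) 1))
        (nhds (-(B - A), B - A)) := by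
      have : ContinuousAt (fun p : ℝ × ℝ =>
          ((-(B - A), (1 - p.1) • (B - A) + p.2 • (C - B)) : P2 × P2)) (0, 0) := by
        fun_prop
      have := this.tendsto
      simp only [sub_zero, one_smul, zero_smul, add_zero] at this
      exact this.mono_left nhdsWithin_le_nhds
    have := hcont.tendsto.comp hmap
    rwa [hval] at this
  · -- second angle
    have key : ∀ p : ℝ × ℝ, p ∈ Set.Ioo (0:ℝ) 1 ×ˢ Set.Ioo (0:ℝ) 1 →
        ∠ (A + p.1 • (B - A)) (B + p.2 • (C - B)) C =
        InnerProductGeometry.angle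
          ((A - B) + p.1 • (B - A) - p.2 • (C - B)) (C - B) := by
      rintro ⟨t, s⟩ ⟨ht, hs⟩
      simp only [EuclideanGeometry.angle]
      have h1 : (A + t • (B - A)) -ᵥ (B + s • (C - B)) =
          (A - B) + t • (B - A) - s • (C - B) := by
        simp only [vsub_eq_sub]; module
      have h2 : C -ᵥ (B + s • (C - B)) = (1 - s) • (C - B) := by
        simp only [vsub_eq_sub]; module
      rw [h1, h2, InnerProductGeometry.angle_smul_right_of_pos _ _ (by linarith [hs.2])]
    refine Tendsto.congr' (eventually_nhdsWithin_of_forall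
      (fun p hp => (key p hp).symm)) ?_
    have hcont := InnerProductGeometry.continuousAt_angle
      (x := ((A - B : P2), C - B)) (by simpa [sub_eq_zero] using hBA.symm) hCB'
    have hval : InnerProductGeometry.angle (A - B) (C - B) = ∠ A B C := by
      simp only [EuclideanGeometry.angle]; simp [vsub_eq_sub]
    have hmap : Tendsto (fun p : ℝ × ℝ =>
        (((A - B) + p.1 • (B - A) - p.2 • (C - B), C - B) : P2 × P2))
        (nhdsWithin (0, 0) (Set.Ioo (0:ℝ) 1 ×ˢ Set.Ioo (0:ℝ) 1))
        (nhds ((A - B : P2), C - B)) := by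
      have : ContinuousAt (fun p : ℝ × ℝ =>
          (((A - B) + p.1 • (B - A) - p.2 • (C - B), C - B) : P2 × P2)) (0, 0) := by
        fun_prop
      have := this.tendsto
      simp only [zero_smul, add_zero, sub_zero] at this
      exact this.mono_left nhdsWithin_le_nhds
    have := hcont.tendsto.comp hmap
    rwa [hval] at this
end
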